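/- Let R be a commutative ring with 0 ≠ 1 and let A be a rook matrix of size l × k over R. Then there is a unique rook matrix P of size l × k in pseudo-echelon form having exactly the same zero rows and zero columns as A, and there exist permutation matrices S of size l × l and S' of size k × k such that A = S * P and A = P * S' with this same matrix P. -/

import Mathlib

/-- A rook matrix: every entry is 0 or 1, and there is at most one entry
equal to 1 in each row and in each column. -/
def IsRookMatrix {l k : ℕ} {R : Type*} [CommRing R]
    (A : Matrix (Fin l) (Fin k) R) : Prop :=
  (∀ i j, A i j = 0 ∨ A i j = 1) ∧
  (∀ i j j', A i j = 1 → A i j' = 1 → j = j') ∧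
  (∀ i i' j, A i j = 1 → A i' j = 1 → i = i')

/-- Pseudo-echelon form: if rows `i < i'` contain nonzero entries in columns
`j` and `j'` respectively, then `j < j'`. -/
def IsPseudoEchelon {l k : ℕ} {R : Type*} [CommRing R]
    (A : Matrix (Fin l) (Fin k) R) : Prop :=
  ∀ i i' j j', i < i' → A i j ≠ 0 → A i' j' ≠ 0 → j < j'

/-- A permutation matrix: the 0–1 matrix of some permutation `σ`, with
entry 1 exactly in the positions `(σ j, j)`. -/
def IsPermMatrix {n : ℕ} {R : Type*} [CommRing R]
    (S : Matrix (Fin n) (Fin n) R) : Prop :=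
  ∃ σ : Equiv.Perm (Fin n), ∀ i j, S i j = if i = σ j then 1 else 0

/-- The matrix `[f]` associated to a partial equivalence (rook diagram)
`f : PEquiv (Fin k) (Fin l)`: the `(q, p)` entry is 1 if `f p = q` and 0
otherwise. -/
def rookMatrixOf {k l : ℕ} (R : Type*) [CommRing R]
    (f : PEquiv (Fin k) (Fin l)) : Matrix (Fin l) (Fin k) R :=
  fun q p => if f p = some q then 1 else 0

/-- A partial equivalence (rook diagram) is monotone (planar) if for all
`p, q` in its domain, `p < q` implies `f p < f q`. -/
def IsMonotonePE {k l : ℕ} (f : PEquiv (Fin k) (Fin l)) : Prop :=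
  ∀ p q i j, i ∈ f p → j ∈ f q → p < q → i < j

theorem rookMatrix_unique_pseudoEchelon_decomposition {l k : ℕ} {R : Type*}
    [CommRing R] [Nontrivial R] (A : Matrix (Fin l) (Fin k) R)
    (hA : IsRookMatrix A) :
    ∃ P : Matrix (Fin l) (Fin k) R,
      (IsRookMatrix P ∧ IsPseudoEchelon P ∧
        (∀ i, (∀ j, P i j = 0) ↔ (∀ j, A i j = 0)) ∧
        (∀ j, (∀ i, P i j = 0) ↔ (∀ i, A i j = 0))) ∧
      (∀ Q : Matrix (Fin l) (Fin k) R,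
        (IsRookMatrix Q ∧ IsPseudoEchelon Q ∧
          (∀ i, (∀ j, Q i j = 0) ↔ (∀ j, A i j = 0)) ∧
          (∀ j, (∀ i, Q i j = 0) ↔ (∀ i, A i j = 0))) → Q = P) ∧
      ∃ (S : Matrix (Fin l) (Fin l) R) (S' : Matrix (Fin k) (Fin k) R),
        IsPermMatrix S ∧ IsPermMatrix S' ∧ A = S * P ∧ A = P * S' := by
  classical
  obtain ⟨h01, hrowu, hcolu⟩ := hA
  have hne1 : ∀ i j, A i j ≠ 0 → A i j = 1 := fun i j h => (h01 i j).resolve_left h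
  set Rs : Finset (Fin l) := Finset.univ.filter (fun i => ∃ j, A i j ≠ 0) with hRsdef
  set Cs : Finset (Fin k) := Finset.univ.filter (fun j => ∃ i, A i j ≠ 0) with hCsdef
  have hRsmem : ∀ i, i ∈ Rs ↔ ∃ j, A i j ≠ 0 := by intro i; simp [hRsdef]
  have hCsmem : ∀ j, j ∈ Cs ↔ ∃ i, A i j ≠ 0 := by intro j; simp [hCsdef]
  have hA0r : ∀ i, i ∉ Rs → ∀ j, A i j = 0 := by
    intro i hi j
    by_contra h
    exact hi ((hRsmem i).2 ⟨j, h⟩)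
  have hA0c : ∀ j, j ∉ Cs → ∀ i, A i j = 0 := by
    intro j hj i
    by_contra h
    exact hj ((hCsmem j).2 ⟨i, h⟩)
  -- the partial bijection between nonzero rows and nonzero columns
  have hφex : ∀ i : {x // x ∈ Rs}, ∃ j : {y // y ∈ Cs}, A i.1 j.1 = 1 := by
    rintro ⟨i, hi⟩
    obtain ⟨j, hj⟩ := (hRsmem i).1 hi
    exact ⟨⟨j, (hCsmem j).2 ⟨i, hj⟩⟩, hne1 i j hj⟩
  choose φ hφ using hφex
  have hψex : ∀ j : {y // y ∈ Cs}, ∃ i : {x // x ∈ Rs}, A i.1 j.1 = 1 := by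
    rintro ⟨j, hj⟩
    obtain ⟨i, hi⟩ := (hCsmem j).1 hj
    exact ⟨⟨i, (hRsmem i).2 ⟨j, hi⟩⟩, hne1 i j hi⟩
  choose ψ hψ using hψex
  have hψφ : ∀ i, ψ (φ i) = i := fun i => Subtype.ext (hcolu _ _ _ (hψ (φ i)) (hφ i))
  have hφψ : ∀ j, φ (ψ j) = j := fun j => Subtype.ext (hrowu _ _ _ (hφ (ψ j)) (hψ j))
  have hcard : Cs.card = Rs.card := by
    rw [← Fintype.card_coe, ← Fintype.card_coe]
    exact Fintype.card_congr (Equiv.symm ⟨φ, ψ, hψφ, hφψ⟩)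
  -- the increasing enumerations of rows and columns
  have hrex : ∃ r : Fin Rs.card → Fin l, StrictMono r ∧ (∀ t, r t ∈ Rs) ∧
      (∀ i ∈ Rs, ∃ t, r t = i) := by
    refine ⟨Rs.orderEmbOfFin rfl, (Rs.orderEmbOfFin rfl).strictMono,
      fun t => Rs.orderEmbOfFin_mem rfl t, ?_⟩
    intro i hi
    have h2 : i ∈ (↑Rs : Set (Fin l)) := hi
    rw [← Finset.range_orderEmbOfFin Rs rfl] at h2
    exact h2
  obtain ⟨r, hrmono, hrmem, hrsurj⟩ := hrex
  have hcex : ∃ c : Fin Rs.card → Fin k, StrictMono c ∧ (∀ t, c t ∈ Cs) ∧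
      (∀ j ∈ Cs, ∃ t, c t = j) ∧
      (∀ f : Fin Rs.card → Fin k, (∀ x, f x ∈ Cs) → StrictMono f → ∀ t, f t = c t) := by
    refine ⟨Cs.orderEmbOfFin hcard, (Cs.orderEmbOfFin hcard).strictMono,
      fun t => Cs.orderEmbOfFin_mem hcard t, ?_, ?_⟩
    · intro j hj
      have h2 : j ∈ (↑Cs : Set (Fin k)) := hj
      rw [← Finset.range_orderEmbOfFin Cs hcard] at h2
      exact h2
    · intro f hfs hf t
      exact congrFun (Finset.orderEmbOfFin_unique hcard hfs hf) t
  obtain ⟨c, hcmono, hcmem, hcsurj, hcuniq⟩ := hcex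
  have hrinj : Function.Injective r := hrmono.injective
  have hcinj : Function.Injective c := hcmono.injective
  -- the pseudo-echelon matrix P
  set P : Matrix (Fin l) (Fin k) R :=
    fun i j => if ∃ t, r t = i ∧ c t = j then 1 else 0 with hPdef
  have hPr : ∀ t j, P (r t) j = if j = c t then 1 else 0 := by
    intro t j
    simp only [hPdef]
    by_cases h : j = c t
    · subst h; rw [if_pos ⟨t, rfl, rfl⟩, if_pos rfl]
    · rw [if_neg, if_neg h]
      rintro ⟨t', htr, htc⟩
      cases hrinj htr
      exact h htc.symm
  have hPc : ∀ i t, P i (c t) = if i = r t then 1 else 0 := by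
    intro i t
    simp only [hPdef]
    by_cases h : i = r t
    · subst h; rw [if_pos ⟨t, rfl, rfl⟩, if_pos rfl]
    · rw [if_neg, if_neg h]
      rintro ⟨t', htr, htc⟩
      cases hcinj htc
      exact h htr.symm
  have hP0r : ∀ i, i ∉ Rs → ∀ j, P i j = 0 := by
    intro i hi j
    simp only [hPdef]
    rw [if_neg]
    rintro ⟨t, htr, -⟩
    exact hi (htr ▸ hrmem t)
  have hP0c : ∀ j, j ∉ Cs → ∀ i, P i j = 0 := by
    intro j hj i
    simp only [hPdef]
    rw [if_neg]
    rintro ⟨t, -, htc⟩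
    exact hj (htc ▸ hcmem t)
  have hPne : ∀ i j, P i j ≠ 0 → ∃ t, r t = i ∧ c t = j := by
    intro i j h
    by_contra hc
    simp only [hPdef] at h
    rw [if_neg hc] at h
    exact h rfl
  -- the basic properties of P
  have hProok : IsRookMatrix P := by
    refine ⟨?_, ?_, ?_⟩
    · intro i j
      simp only [hPdef]
      by_cases h : ∃ t, r t = i ∧ c t = j
      · right; rw [if_pos h]
      · left; rw [if_neg h]
    · intro i j j' hj hj'
      obtain ⟨t, htr, htc⟩ := hPne i j (hj ▸ one_ne_zero)
      obtain ⟨t', htr', htc'⟩ := hPne i j' (hj' ▸ one_ne_zero)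
      cases hrinj (htr.trans htr'.symm)
      exact htc.symm.trans htc'
    · intro i i' j hi hi'
      obtain ⟨t, htr, htc⟩ := hPne i j (hi ▸ one_ne_zero)
      obtain ⟨t', htr', htc'⟩ := hPne i' j (hi' ▸ one_ne_zero)
      cases hcinj (htc.trans htc'.symm)
      exact htr.symm.trans htr'
  have hPech : IsPseudoEchelon P := by
    intro i i' j j' hii hij hij'
    obtain ⟨t, htr, htc⟩ := hPne i j hij
    obtain ⟨t', htr', htc'⟩ := hPne i' j' hij'
    have ht : t < t' := by
      rw [← hrmono.lt_iff_lt]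
      rw [htr, htr']
      exact hii
    rw [← htc, ← htc']
    exact hcmono ht
  have hProws : ∀ i, (∀ j, P i j = 0) ↔ (∀ j, A i j = 0) := by
    intro i
    constructor
    · intro h j
      by_contra hj
      have hi : i ∈ Rs := (hRsmem i).2 ⟨j, hj⟩
      obtain ⟨t, ht⟩ := hrsurj i hi
      have h2 := h (c t)
      rw [← ht, hPr, if_pos rfl] at h2
      exact one_ne_zero h2
    · intro h j
      apply hP0r
      intro hi
      obtain ⟨j', hj'⟩ := (hRsmem i).1 hi
      exact hj' (h j')
  have hPcols : ∀ j, (∀ i, P i j = 0) ↔ (∀ i, A i j = 0) := by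
    intro j
    constructor
    · intro h i
      by_contra hi
      have hj : j ∈ Cs := (hCsmem j).2 ⟨i, hi⟩
      obtain ⟨t, ht⟩ := hcsurj j hj
      have h2 := h (r t)
      rw [← ht, hPc, if_pos rfl] at h2
      exact one_ne_zero h2
    · intro h i
      apply hP0c
      intro hj
      obtain ⟨i', hi'⟩ := (hCsmem j).1 hj
      exact hi' (h i')
  refine ⟨P, ⟨hProok, hPech, hProws, hPcols⟩, ?_, ?_⟩
  · -- uniqueness
    rintro Q ⟨⟨q01, qrow, qcol⟩, qech, qrows, qcols⟩
    have hq0r : ∀ i, i ∉ Rs → ∀ j, Q i j = 0 := fun i hi => (qrows i).2 (hA0r i hi)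
    have hgex : ∀ t, ∃ j, Q (r t) j = 1 ∧ j ∈ Cs := by
      intro t
      have hQrow : ¬ ∀ j, Q (r t) j = 0 := by
        intro hz
        obtain ⟨j, hj⟩ := (hRsmem (r t)).1 (hrmem t)
        exact hj ((qrows (r t)).1 hz j)
      push_neg at hQrow
      obtain ⟨j, hj⟩ := hQrow
      have hj1 : Q (r t) j = 1 := (q01 _ _).resolve_left hj
      refine ⟨j, hj1, ?_⟩
      rw [hCsmem]
      by_contra hc
      push_neg at hc
      exact hj ((qcols j).2 hc (r t))
    choose g hg1 hgC using hgex
    have hgmono : StrictMono g := by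
      intro t t' htt
      exact qech (r t) (r t') (g t) (g t') (hrmono htt)
        (fun h => one_ne_zero (h ▸ (hg1 t).symm))
        (fun h => one_ne_zero (h ▸ (hg1 t').symm))
    have hgc : ∀ t, g t = c t := hcuniq g hgC hgmono
    ext i j
    by_cases hi : i ∈ Rs
    · obtain ⟨t, rfl⟩ := hrsurj i hi
      rw [hPr]
      by_cases hj : j = c t
      · rw [if_pos hj, hj, ← hgc t]
        exact hg1 t
      · rw [if_neg hj]
        rcases q01 (r t) j with h | h
        · exact h
        · exact absurd ((qrow _ _ _ h (hg1 t)).trans (hgc t)) hj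
    · rw [hq0r i hi j, hP0r i hi j]
  · -- the permutation matrices
    choose cinv hcinv using hcsurj
    choose rinv hrinv using hrsurj
    -- row permutation
    set ρ₀ : Fin l → Fin l :=
      fun i => if h : i ∈ Rs then r (cinv (φ ⟨i, h⟩).1 (φ ⟨i, h⟩).2) else i with hρ₀def
    have hρ₀inj : Function.Injective ρ₀ := by
      intro a b hab
      by_cases ha : a ∈ Rs <;> by_cases hb : b ∈ Rs
      · simp only [hρ₀def, dif_pos ha, dif_pos hb] at hab
        have ht := hrinj hab
        have hφab : (φ ⟨a, ha⟩).1 = (φ ⟨b, hb⟩).1 := by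
          rw [← hcinv _ (φ ⟨a, ha⟩).2, ← hcinv _ (φ ⟨b, hb⟩).2, ht]
        exact hcolu a b _ (hφ ⟨a, ha⟩) (hφab ▸ hφ ⟨b, hb⟩)
      · exfalso
        simp only [hρ₀def, dif_pos ha, dif_neg hb] at hab
        exact hb (hab ▸ hrmem _)
      · exfalso
        simp only [hρ₀def, dif_neg ha, dif_pos hb] at hab
        exact ha (hab ▸ hrmem _)
      · simpa only [hρ₀def, dif_neg ha, dif_neg hb] using hab
    have hρ₀bij : Function.Bijective ρ₀ := Finite.injective_iff_bijective.1 hρ₀inj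
    set ρ : Equiv.Perm (Fin l) := Equiv.ofBijective ρ₀ hρ₀bij with hρdef
    have hρapp : ∀ x, ρ x = ρ₀ x := fun x => rfl
    have hρP : ∀ i j, P (ρ i) j = A i j := by
      intro i j
      by_cases hi : i ∈ Rs
      · have hstep : ρ i = r (cinv (φ ⟨i, hi⟩).1 (φ ⟨i, hi⟩).2) := by
          rw [hρapp]; exact dif_pos hi
        rw [hstep, hPr]
        have hct : c (cinv (φ ⟨i, hi⟩).1 (φ ⟨i, hi⟩).2) = (φ ⟨i, hi⟩).1 := hcinv _ _
        by_cases hj : j = c (cinv (φ ⟨i, hi⟩).1 (φ ⟨i, hi⟩).2)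
        · rw [if_pos hj, hj, hct]
          exact (hφ ⟨i, hi⟩).symm
        · rw [if_neg hj]
          rcases h01 i j with h | h
          · exact h.symm
          · exact absurd ((hrowu i j _ h (hφ ⟨i, hi⟩)).trans hct.symm) hj
      · have hstep : ρ i = i := by rw [hρapp]; exact dif_neg hi
        rw [hstep, hP0r i hi, hA0r i hi]
    -- column permutation
    set τ₀ : Fin k → Fin k :=
      fun j => if h : j ∈ Cs then c (rinv (ψ ⟨j, h⟩).1 (ψ ⟨j, h⟩).2) else j with hτ₀def
    have hτ₀inj : Function.Injective τ₀ := by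
      intro a b hab
      by_cases ha : a ∈ Cs <;> by_cases hb : b ∈ Cs
      · simp only [hτ₀def, dif_pos ha, dif_pos hb] at hab
        have ht := hcinj hab
        have hψab : (ψ ⟨a, ha⟩).1 = (ψ ⟨b, hb⟩).1 := by
          rw [← hrinv _ (ψ ⟨a, ha⟩).2, ← hrinv _ (ψ ⟨b, hb⟩).2, ht]
        exact hrowu _ a b (hψ ⟨a, ha⟩) (hψab ▸ hψ ⟨b, hb⟩)
      · exfalso
        simp only [hτ₀def, dif_pos ha, dif_neg hb] at hab
        exact hb (hab ▸ hcmem _)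
      · exfalso
        simp only [hτ₀def, dif_neg ha, dif_pos hb] at hab
        exact ha (hab ▸ hcmem _)
      · simpa only [hτ₀def, dif_neg ha, dif_neg hb] using hab
    have hτ₀bij : Function.Bijective τ₀ := Finite.injective_iff_bijective.1 hτ₀inj
    set τ : Equiv.Perm (Fin k) := Equiv.ofBijective τ₀ hτ₀bij with hτdef
    have hτapp : ∀ x, τ x = τ₀ x := fun x => rfl
    have hτP : ∀ i j, P i (τ j) = A i j := by
      intro i j
      by_cases hj : j ∈ Cs
      · have hstep : τ j = c (rinv (ψ ⟨j, hj⟩).1 (ψ ⟨j, hj⟩).2) := by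
          rw [hτapp]; exact dif_pos hj
        rw [hstep, hPc]
        have hrt : r (rinv (ψ ⟨j, hj⟩).1 (ψ ⟨j, hj⟩).2) = (ψ ⟨j, hj⟩).1 := hrinv _ _
        by_cases hi : i = r (rinv (ψ ⟨j, hj⟩).1 (ψ ⟨j, hj⟩).2)
        · rw [if_pos hi, hi, hrt]
          exact (hψ ⟨j, hj⟩).symm
        · rw [if_neg hi]
          rcases h01 i j with h | h
          · exact h.symm
          · exact absurd ((hcolu i _ j h (hψ ⟨j, hj⟩)).trans hrt.symm) hi
      · have hstep : τ j = j := by rw [hτapp]; exact dif_neg hj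
        rw [hstep, hP0c j hj, hA0c j hj]
    refine ⟨fun i j => if i = ρ.symm j then 1 else 0,
      fun i j => if i = τ j then 1 else 0,
      ⟨ρ.symm, fun i j => rfl⟩, ⟨τ, fun i j => rfl⟩, ?_, ?_⟩
    · ext i j
      symm
      erw [Matrix.mul_apply]
      have hterm : ∀ t, (if i = ρ.symm t then (1 : R) else 0) * P t j =
          if t = ρ i then P t j else 0 := by
        intro t
        by_cases h : t = ρ i
        · rw [if_pos h, h, Equiv.symm_apply_apply, if_pos rfl, one_mul]
        · rw [if_neg h, if_neg (fun e => h (by rw [e, Equiv.apply_symm_apply])), zero_mul]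
      rw [Finset.sum_congr rfl (fun t _ => hterm t),
        Finset.sum_ite_eq' Finset.univ (ρ i) (fun t => P t j),
        if_pos (Finset.mem_univ _)]
      exact hρP i j
    · ext i j
      symm
      erw [Matrix.mul_apply]
      have hterm : ∀ t, P i t * (if t = τ j then (1 : R) else 0) =
          if t = τ j then P i t else 0 := by
        intro t
        by_cases h : t = τ j
        · rw [if_pos h, if_pos h, mul_one]
        · rw [if_neg h, if_neg h, mul_zero]
      rw [Finset.sum_congr rfl (fun t _ => hterm t),
        Finset.sum_ite_eq' Finset.univ (τ j) (fun t => P i t),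
        if_pos (Finset.mem_univ _)]
      exact hτP i j
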